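/- The dimension of the real vector space {W̃ W̃^T Ω W̃ + K W̃_⊥ : Ω ∈ ℝ^{n×n} skew-symmetric, K ∈ ℝ^{n×(p−n)}} equals np − n(n+1)/2, given that W̃ ∈ ℝ^{n×p} has rank n, W̃_⊥ ∈ ℝ^{(p−n)×p} has rank p−n, and the rows of W̃_⊥ are orthogonal to the rows of W̃. -/

import Mathlib

open Matrix

/-- A square real matrix of full rank is a unit. -/
lemma aux_isUnit_of_rank_eq {m : ℕ} (A : Matrix (Fin m) (Fin m) ℝ) (h : A.rank = m) :
    IsUnit A := by
  rw [← Matrix.mulVec_surjective_iff_isUnit]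
  have : LinearMap.range A.mulVecLin = ⊤ := by
    apply Submodule.eq_top_of_finrank_eq
    rw [← Matrix.rank, h, Module.finrank_pi, Fintype.card_fin]
  intro v
  exact (LinearMap.range_eq_top.mp this) v

/-- The submodule of skew-symmetric matrices. -/
def auxSkew (n : ℕ) : Submodule ℝ (Matrix (Fin n) (Fin n) ℝ) where
  carrier := {Ω | Ωᵀ = -Ω}
  add_mem' := by
    intro a b ha hb
    simp only [Set.mem_setOf_eq] at *
    rw [transpose_add, ha, hb, neg_add]
  zero_mem' := by simp
  smul_mem' := by
    intro c a ha
    simp only [Set.mem_setOf_eq] at *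
    rw [transpose_smul, ha, smul_neg]

@[simp] lemma mem_auxSkew {n : ℕ} (Ω : Matrix (Fin n) (Fin n) ℝ) :
    Ω ∈ auxSkew n ↔ Ωᵀ = -Ω := Iff.rfl

lemma auxSkew_apply {n : ℕ} {Ω : Matrix (Fin n) (Fin n) ℝ} (h : Ω ∈ auxSkew n)
    (i j : Fin n) : Ω j i = -Ω i j := by
  rw [mem_auxSkew] at h
  have := congrFun (congrFun h i) j
  simpa using this

noncomputable def auxSkewEquiv (n : ℕ) :
    auxSkew n ≃ₗ[ℝ] ((Σ i : Fin n, Fin i.val) → ℝ) := by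
  refine LinearEquiv.ofBijective
    { toFun := fun Ω x => Ω.1 x.1 ⟨x.2.val, x.2.isLt.trans x.1.isLt⟩
      map_add' := by intros; rfl
      map_smul' := by intros; rfl } ⟨?_, ?_⟩
  · intro Ω Ω' h
    apply Subtype.ext
    funext i j
    rcases lt_trichotomy j.val i.val with hij | hij | hij
    · exact congrFun h ⟨i, ⟨j.val, hij⟩⟩
    · have : j = i := Fin.ext hij
      subst this
      have h1 := auxSkew_apply Ω.2 j j
      have h2 := auxSkew_apply Ω'.2 j j
      linarith
    · have h1 := auxSkew_apply Ω.2 j i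
      have h2 := auxSkew_apply Ω'.2 j i
      rw [h1, h2]
      exact congrArg Neg.neg (congrFun h ⟨j, ⟨i.val, hij⟩⟩)
  · intro f
    refine ⟨⟨fun i j =>
        if h : j.val < i.val then f ⟨i, ⟨j.val, h⟩⟩
        else if h' : i.val < j.val then -f ⟨j, ⟨i.val, h'⟩⟩ else 0, ?_⟩, ?_⟩
    · refine (mem_auxSkew _).mpr ?_
      ext i j
      show (if h : i.val < j.val then _ else if h' : j.val < i.val then _ else 0) =
        -(if h : j.val < i.val then _ else if h' : i.val < j.val then _ else 0)
      rcases lt_trichotomy i.val j.val with h | h | h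
      · rw [dif_pos h, dif_neg (lt_asymm h), dif_pos h, neg_neg]
      · have : i = j := Fin.ext h
        subst this
        simp
      · rw [dif_neg (lt_asymm h), dif_pos h, dif_pos h]
    · funext x
      show (if h : x.2.val < x.1.val then _ else _) = f x
      rw [dif_pos x.2.isLt]

lemma aux_finrank_skew (n : ℕ) : Module.finrank ℝ (auxSkew n) = n * (n - 1) / 2 := by
  rw [(auxSkewEquiv n).finrank_eq, Module.finrank_pi, Fintype.card_sigma]
  simp only [Fintype.card_fin]
  rw [Fin.sum_univ_eq_sum_range (fun i => i) n, Finset.sum_range_id]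

/-- The tangent space `{W̃ W̃ᵀ Ω W̃ + K W̃⊥}` has dimension `np − n(n+1)/2`. -/
theorem stmt_7 {n p : ℕ} (hpn : n ≤ p)
    (W : Matrix (Fin n) (Fin p) ℝ) (hWrank : W.rank = n)
    (Wperp : Matrix (Fin (p - n)) (Fin p) ℝ) (hWperprank : Wperp.rank = p - n)
    (hperp : Wperp * Wᵀ = 0) :
    Module.finrank ℝ ↥(Submodule.span ℝ
      {T : Matrix (Fin n) (Fin p) ℝ |
        ∃ (Ω : Matrix (Fin n) (Fin n) ℝ) (K : Matrix (Fin n) (Fin (p - n)) ℝ),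
          Ωᵀ = -Ω ∧ T = W * Wᵀ * Ω * W + K * Wperp})
      = n * p - n * (n + 1) / 2 := by
  -- the linear parametrization map
  set L : (auxSkew n × Matrix (Fin n) (Fin (p - n)) ℝ) →ₗ[ℝ] Matrix (Fin n) (Fin p) ℝ :=
    { toFun := fun x => W * Wᵀ * x.1.1 * W + x.2 * Wperp
      map_add' := by
        intro x y
        simp only [Prod.fst_add, Prod.snd_add, Submodule.coe_add, Matrix.mul_add,
          Matrix.add_mul]
        abel
      map_smul' := by
        intro c x
        simp only [Prod.smul_fst, Prod.smul_snd, Submodule.coe_smul, Matrix.mul_smul,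
          Matrix.smul_mul, smul_add, RingHom.id_apply] } with hL
  -- the set is the range of L
  have hset : {T : Matrix (Fin n) (Fin p) ℝ |
        ∃ (Ω : Matrix (Fin n) (Fin n) ℝ) (K : Matrix (Fin n) (Fin (p - n)) ℝ),
          Ωᵀ = -Ω ∧ T = W * Wᵀ * Ω * W + K * Wperp} = ↑(LinearMap.range L) := by
    ext T
    constructor
    · rintro ⟨Ω, K, hΩ, rfl⟩
      exact ⟨(⟨Ω, hΩ⟩, K), rfl⟩
    · rintro ⟨⟨Ω, K⟩, rfl⟩
      exact ⟨Ω.1, K, Ω.2, rfl⟩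
  rw [hset, Submodule.span_eq]
  -- invertibility of the Gram matrices
  have hMd : IsUnit (W * Wᵀ).det := by
    rw [← Matrix.isUnit_iff_isUnit_det]
    exact aux_isUnit_of_rank_eq _ (by rw [Matrix.rank_self_mul_transpose, hWrank])
  have hNd : IsUnit (Wperp * Wperpᵀ).det := by
    rw [← Matrix.isUnit_iff_isUnit_det]
    exact aux_isUnit_of_rank_eq _ (by rw [Matrix.rank_self_mul_transpose, hWperprank])
  -- injectivity of L
  have hinj : Function.Injective L := by
    rw [← LinearMap.ker_eq_bot, LinearMap.ker_eq_bot']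
    rintro ⟨Ω, K⟩ h
    have h0 : W * Wᵀ * Ω.1 * W + K * Wperp = 0 := h
    have h1 : (W * Wᵀ) * Ω.1 * (W * Wᵀ) = 0 := by
      have := congrArg (· * Wᵀ) h0
      simpa [Matrix.add_mul, Matrix.mul_assoc, hperp] using this
    have hΩ : (Ω : Matrix (Fin n) (Fin n) ℝ) = 0 := by
      have : (W * Wᵀ)⁻¹ * ((W * Wᵀ) * Ω.1 * (W * Wᵀ)) * (W * Wᵀ)⁻¹ = Ω.1 := by
        rw [show (W * Wᵀ) * Ω.1 * (W * Wᵀ) = (W * Wᵀ) * (Ω.1 * (W * Wᵀ)) from by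
          rw [Matrix.mul_assoc]]
        rw [← Matrix.mul_assoc, Matrix.nonsing_inv_mul _ hMd, Matrix.one_mul,
          Matrix.mul_assoc, Matrix.mul_nonsing_inv _ hMd, Matrix.mul_one]
      rw [h1] at this
      simpa using this.symm
    have hK : K = 0 := by
      have h2 : K * Wperp = 0 := by
        rw [hΩ] at h0
        simpa using h0
      have : K * (Wperp * Wperpᵀ) * (Wperp * Wperpᵀ)⁻¹ = K := by
        rw [Matrix.mul_assoc, Matrix.mul_nonsing_inv _ hNd, Matrix.mul_one]
      rw [← Matrix.mul_assoc, h2] at this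
      simpa using this.symm
    exact Prod.ext (Subtype.ext hΩ) hK
  rw [LinearMap.finrank_range_of_inj hinj, Module.finrank_prod, aux_finrank_skew,
    Module.finrank_matrix, Fintype.card_fin, Fintype.card_fin, Module.finrank_self, mul_one]
  -- arithmetic
  have key2 : n * (n - 1) / 2 * 2 = n * (n - 1) := by
    rw [← Finset.sum_range_id, Finset.sum_range_id_mul_two]
  have key1 : n * (n - 1) + n = n * n := by
    cases n with
    | zero => simp
    | succ m => simp only [Nat.succ_sub_one]; ring
  have key3 : n * (n + 1) / 2 * 2 = n * (n + 1) :=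
    Nat.div_mul_cancel (Nat.even_mul_succ_self n).two_dvd
  have key4 : n * (n + 1) = n * n + n := by ring
  have key5 : n * (p - n) + n * n = n * p := by
    rw [← Nat.mul_add, Nat.sub_add_cancel hpn]
  have key6 : n * n ≤ n * p := Nat.mul_le_mul_left n hpn
  omega
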